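/- Let q be a real number with q > 0 and q ≠ 1, let r ≥ 0 and d ≥ 0 be integers, and let P be a real polynomial with deg P ≤ d. Let (a_k)_{k≥0} be a real sequence satisfying a_k · [k+r] = P(k) for all integers k ≥ 0, and define t_n := (q−1)^{−n} · Σ_{k=0}^{n} (−1)^{n−k} · binom(n,k) · a_k for n ≥ 0. Then for every integer n > d, q^r · Σ_{k=0}^{n} binom(n,k) · q^k · t_k = t_n. -/

import Mathlib

open Finset

/-- The q-bracket: `[x] = (q^x - 1)/(q - 1)`. -/
noncomputable def qb (q x : ℝ) : ℝ := (q ^ x - 1) / (q - 1)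

open Polynomial fwdDiff

-- iterated forward difference of a polynomial of degree ≤ d vanishes for n > d
lemma fd_iter_poly_zero : ∀ d : ℕ, ∀ P : Polynomial ℝ, P.degree ≤ (d : WithBot ℕ) →
    ∀ n : ℕ, d < n → (fwdDiff (1:ℕ))^[n] (fun k : ℕ => P.eval (k : ℝ)) 0 = 0 := by
  intro d
  induction d with
  | zero =>
    intro P hP n hn
    obtain ⟨c, rfl⟩ : ∃ c, P = C c := ⟨P.coeff 0, (Polynomial.eq_C_of_degree_le_zero hP)⟩
    obtain ⟨m, rfl⟩ := Nat.exists_eq_succ_of_ne_zero hn.ne'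
    simp only [Polynomial.eval_C]
    rw [Function.iterate_succ_apply, fwdDiff_const]
    rw [Function.iterate_fixed (fwdDiff_const 1 (0 : ℝ))]
  | succ d IH =>
    intro P hP n hn
    obtain ⟨m, rfl⟩ := Nat.exists_eq_succ_of_ne_zero (by omega : n ≠ 0)
    have hm : d < m := by omega
    set Q : Polynomial ℝ := P.comp (X + C 1) - P with hQdef
    have heval : fwdDiff (1:ℕ) (fun k : ℕ => P.eval (k : ℝ)) = fun k : ℕ => Q.eval (k : ℝ) := by
      funext k
      simp only [fwdDiff, hQdef, Polynomial.eval_sub, Polynomial.eval_comp,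
        Polynomial.eval_add, Polynomial.eval_X, Polynomial.eval_C]
      push_cast
      ring
    have hQ : Q.degree ≤ (d : WithBot ℕ) := by
      by_cases hQ0 : Q = 0
      · simp [hQ0]
      have hP0 : P ≠ 0 := by
        rintro rfl
        simp [hQdef] at hQ0
      have hlc : (P.comp (X + C 1)).leadingCoeff = P.leadingCoeff := by
        rw [Polynomial.leadingCoeff_comp (by rw [Polynomial.natDegree_X_add_C]; exact one_ne_zero),
          Polynomial.leadingCoeff_X_add_C, one_pow, mul_one]
      have hcomp0 : P.comp (X + C 1) ≠ 0 := by
        intro h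
        apply hP0
        rw [← Polynomial.leadingCoeff_eq_zero, ← hlc, h, Polynomial.leadingCoeff_zero]
      have hdeg : (P.comp (X + C 1)).degree = P.degree := by
        rw [Polynomial.degree_eq_natDegree hcomp0, Polynomial.degree_eq_natDegree hP0,
          Polynomial.natDegree_comp, Polynomial.natDegree_X_add_C, mul_one]
      have hlt : Q.degree < P.degree := hdeg ▸ Polynomial.degree_sub_lt hdeg hcomp0 hlc
      have : Q.degree < ((d + 1 : ℕ) : WithBot ℕ) := lt_of_lt_of_le hlt hP
      rw [← Polynomial.natDegree_lt_iff_degree_lt hQ0] at this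
      exact Polynomial.degree_le_of_natDegree_le (by omega)
    rw [Function.iterate_succ_apply, heval]
    exact IH Q hQ m hm

lemma alt_sum_poly_zero (d : ℕ) (P : Polynomial ℝ) (hP : P.degree ≤ (d : WithBot ℕ))
    (n : ℕ) (hn : d < n) :
    ∑ k ∈ range (n + 1), (-1 : ℝ) ^ (n - k) * (n.choose k : ℝ) * P.eval (k : ℝ) = 0 := by
  have h := fwdDiff_iter_eq_sum_shift (1 : ℕ) (fun k : ℕ => P.eval (k : ℝ)) n 0
  rw [fd_iter_poly_zero d P hP n hn] at h
  rw [h]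
  apply Finset.sum_congr rfl
  intro k _
  simp [zsmul_eq_mul, smul_eq_mul]

theorem symbolic_formula_for_values_at_zero (q : ℝ) (hq : 0 < q) (hq1 : q ≠ 1)
    (r d : ℕ) (P : Polynomial ℝ) (hP : P.degree ≤ (d : WithBot ℕ))
    (a : ℕ → ℝ) (ha : ∀ k : ℕ, a k * qb q ((k + r : ℕ) : ℝ) = P.eval (k : ℝ))
    (t : ℕ → ℝ)
    (ht : ∀ n : ℕ,
      t n = ((q - 1) ^ n)⁻¹ *
        ∑ k ∈ range (n + 1), (-1 : ℝ) ^ (n - k) * (n.choose k : ℝ) * a k) :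
    ∀ n : ℕ, d < n →
      q ^ r * ∑ k ∈ range (n + 1), (n.choose k : ℝ) * q ^ k * t k = t n := by
  intro n hn
  have hc : q - 1 ≠ 0 := sub_ne_zero.mpr hq1
  set u : ℝ := (q - 1)⁻¹ with hu
  have key : ∀ k : ℕ, a k * (q ^ (k + r) - 1) = (q - 1) * P.eval (k : ℝ) := by
    intro k
    have h := ha k
    rw [qb, Real.rpow_natCast] at h
    field_simp at h
    linear_combination h
  -- step 1: expand t k
  have h1 : ∑ k ∈ range (n + 1), (n.choose k : ℝ) * q ^ k * t k
      = ∑ k ∈ range (n + 1), ∑ j ∈ range (k + 1),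
          ((n.choose k : ℝ) * q ^ k * u ^ k * ((-1 : ℝ) ^ (k - j) * (k.choose j : ℝ))) * a j := by
    apply Finset.sum_congr rfl
    intro k _
    rw [ht k, hu, ← inv_pow, Finset.mul_sum, Finset.mul_sum]
    exact Finset.sum_congr rfl fun j _ => by ring
  -- step 2: swap sums
  have h2 : ∑ k ∈ range (n + 1), ∑ j ∈ range (k + 1),
          ((n.choose k : ℝ) * q ^ k * u ^ k * ((-1 : ℝ) ^ (k - j) * (k.choose j : ℝ))) * a j
      = ∑ j ∈ range (n + 1), ∑ k ∈ Ico j (n + 1),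
          ((n.choose k : ℝ) * q ^ k * u ^ k * ((-1 : ℝ) ^ (k - j) * (k.choose j : ℝ))) * a j :=
    Finset.sum_comm' (fun k j => by simp only [mem_range, mem_Ico]; omega)
  -- step 3: evaluate inner sums
  have h3 : ∀ j ∈ range (n + 1),
      ∑ k ∈ Ico j (n + 1),
          ((n.choose k : ℝ) * q ^ k * u ^ k * ((-1 : ℝ) ^ (k - j) * (k.choose j : ℝ))) * a j
      = ((-1 : ℝ) ^ (n - j) * (n.choose j : ℝ) * q ^ j * u ^ n) * a j := by
    intro j hj
    have hjn : j ≤ n := by simpa [Nat.lt_succ_iff] using hj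
    rw [← Finset.sum_mul]
    congr 1
    rw [Finset.sum_Ico_eq_sum_range, show n + 1 - j = (n - j) + 1 from by omega]
    have step : ∀ m ∈ range ((n - j) + 1),
        (n.choose (j + m) : ℝ) * q ^ (j + m) * u ^ (j + m) *
            ((-1 : ℝ) ^ ((j + m) - j) * ((j + m).choose j : ℝ))
        = ((n.choose j : ℝ) * (q * u) ^ j) * (((n - j).choose m : ℝ) * (-(q * u)) ^ m) := by
      intro m hm
      have hmle : m ≤ n - j := by simpa [Nat.lt_succ_iff] using hm
      have hcid : ((n.choose (j + m)) * ((j + m).choose j) : ℕ)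
          = (n.choose j) * ((n - j).choose m) := by
        have h := Nat.choose_mul (n := n) (show j ≤ j + m by omega)
        simpa using h
      have hcidR : ((n.choose (j + m)) : ℝ) * (((j + m).choose j) : ℝ)
          = ((n.choose j) : ℝ) * (((n - j).choose m) : ℝ) := by exact_mod_cast hcid
      rw [show (j + m) - j = m from by omega]
      linear_combination (q ^ (j + m) * u ^ (j + m) * (-1 : ℝ) ^ m) * hcidR
    rw [Finset.sum_congr rfl step, ← Finset.mul_sum]
    have hb : ∑ m ∈ range ((n - j) + 1), (((n - j).choose m : ℝ)) * (-(q * u)) ^ m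
        = (-(q * u) + 1) ^ (n - j) := by
      rw [add_pow]
      exact Finset.sum_congr rfl fun m _ => by rw [one_pow, mul_one, mul_comm]
    rw [hb]
    have hval : -(q * u) + 1 = -u := by
      rw [hu]
      field_simp
      ring
    rw [hval, neg_pow, mul_pow]
    have hpow : (u : ℝ) ^ j * u ^ (n - j) = u ^ n := by
      rw [← pow_add]
      congr 1
      omega
    linear_combination ((-1 : ℝ) ^ (n - j) * (n.choose j : ℝ) * q ^ j) * hpow
  -- finish
  have hfin : ∑ j ∈ range (n + 1), (-1 : ℝ) ^ (n - j) * (n.choose j : ℝ) * (q ^ (j + r) * a j)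
      = ∑ j ∈ range (n + 1), (-1 : ℝ) ^ (n - j) * (n.choose j : ℝ) * a j := by
    rw [← sub_eq_zero, ← Finset.sum_sub_distrib]
    have e : ∀ j ∈ range (n + 1),
        (-1 : ℝ) ^ (n - j) * (n.choose j : ℝ) * (q ^ (j + r) * a j)
          - (-1 : ℝ) ^ (n - j) * (n.choose j : ℝ) * a j
        = (q - 1) * ((-1 : ℝ) ^ (n - j) * (n.choose j : ℝ) * P.eval (j : ℝ)) := by
      intro j _
      linear_combination ((-1 : ℝ) ^ (n - j) * (n.choose j : ℝ)) * key j
    rw [Finset.sum_congr rfl e, ← Finset.mul_sum, alt_sum_poly_zero d P hP n hn, mul_zero]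
  rw [h1, h2, Finset.sum_congr rfl h3, ht n, ← inv_pow, ← hu]
  calc q ^ r * ∑ j ∈ range (n + 1),
        ((-1 : ℝ) ^ (n - j) * (n.choose j : ℝ) * q ^ j * u ^ n) * a j
      = u ^ n * ∑ j ∈ range (n + 1),
          (-1 : ℝ) ^ (n - j) * (n.choose j : ℝ) * (q ^ (j + r) * a j) := by
        rw [Finset.mul_sum, Finset.mul_sum]
        exact Finset.sum_congr rfl fun i _ => by ring
    _ = u ^ n * ∑ j ∈ range (n + 1), (-1 : ℝ) ^ (n - j) * (n.choose j : ℝ) * a j := by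
        rw [hfin]
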